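/- For each fixed first column c ∈ {0,1}^3, the 18 Gray codes starting at c fall into exactly 3 equivalence classes under row permutation and row bit-inversion, each class of size 6, and the classes are distinguished by their multisets of transition counts. -/

import Mathlib

/-- A 3-bit Gray code: a `3 × 8` binary matrix whose columns list all vectors of
`{0,1}^3`, with consecutive columns differing in exactly one bit. -/
def IsGrayCode3 (M : Fin 3 → Fin 8 → Bool) : Prop :=
  Function.Bijective (fun j : Fin 8 => fun i : Fin 3 => M i j) ∧
  ∀ j : Fin 7,
    (Finset.univ.filter fun i : Fin 3 => M i j.castSucc ≠ M i j.succ).card = 1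

instance (M : Fin 3 → Fin 8 → Bool) : Decidable (IsGrayCode3 M) := by
  unfold IsGrayCode3; infer_instance

/-- The transition count of row `i` (number of consecutive bit changes, no
wrap-around). -/
def transCount3 (M : Fin 3 → Fin 8 → Bool) (i : Fin 3) : ℕ :=
  (Finset.univ.filter fun j : Fin 7 => M i j.castSucc ≠ M i j.succ).card

/-- The multiset of row transition counts of a matrix. -/
def transCounts3 (M : Fin 3 → Fin 8 → Bool) : Multiset ℕ :=
  Multiset.map (transCount3 M) Finset.univ.val

/-- Two binary matrices are equivalent if one arises from the other by permuting
rows and/or complementing all bits of some rows. -/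
def MatEquiv3 (A B : Fin 3 → Fin 8 → Bool) : Prop :=
  ∃ (π : Equiv.Perm (Fin 3)) (ε : Fin 3 → Bool),
    ∀ i j, B i j = xor (ε i) (A (π i) j)

instance (A B : Fin 3 → Fin 8 → Bool) : Decidable (MatEquiv3 A B) := by
  unfold MatEquiv3; infer_instance



/-- Column sequence generated by a transition sequence `t` starting from `c`. -/
def cols (c : Fin 3 → Bool) (t : Fin 7 → Fin 3) : ℕ → Fin 3 → Bool
  | 0 => c
  | j+1 => fun i => if h : j < 7 then xor (decide (t ⟨j, h⟩ = i)) (cols c t j i) else cols c t j i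

/-- Matrix generated by a transition sequence. -/
def g (c : Fin 3 → Bool) (t : Fin 7 → Fin 3) : Fin 3 → Fin 8 → Bool :=
  fun i j => cols c t j.val i

def Q (t : Fin 7 → Fin 3) : Prop :=
  Function.Injective (fun j : Fin 8 => fun i : Fin 3 => g (fun _ => false) t i j)

instance (t) : Decidable (Q t) := by unfold Q; infer_instance

def R (t : Fin 7 → Fin 3) : Prop := ∀ j : Fin 6, t j.castSucc ≠ t j.succ

instance (t) : Decidable (R t) := by unfold R; infer_instance
def T18 : List (Fin 7 → Fin 3) := [
  ![0, 1, 0, 2, 0, 1, 0],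
  ![0, 1, 0, 2, 1, 0, 1],
  ![0, 1, 2, 1, 0, 1, 2],
  ![0, 2, 0, 1, 0, 2, 0],
  ![0, 2, 0, 1, 2, 0, 2],
  ![0, 2, 1, 2, 0, 2, 1],
  ![1, 0, 1, 2, 0, 1, 0],
  ![1, 0, 1, 2, 1, 0, 1],
  ![1, 0, 2, 0, 1, 0, 2],
  ![1, 2, 0, 2, 1, 2, 0],
  ![1, 2, 1, 0, 1, 2, 1],
  ![1, 2, 1, 0, 2, 1, 2],
  ![2, 0, 1, 0, 2, 0, 1],
  ![2, 0, 2, 1, 0, 2, 0],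
  ![2, 0, 2, 1, 2, 0, 2],
  ![2, 1, 0, 1, 2, 1, 0],
  ![2, 1, 2, 0, 1, 2, 1],
  ![2, 1, 2, 0, 2, 1, 2]
]
def S0list : List (Fin 3 → Fin 8 → Bool) := [
  ![![false, true, true, false, false, true, true, false],
    ![false, false, true, true, true, true, false, false],
    ![false, false, false, false, true, true, true, true]],
  ![![false, true, true, false, false, false, true, true],
    ![false, false, true, true, true, false, false, true],
    ![false, false, false, false, true, true, true, true]],
  ![![false, true, true, true, true, false, false, false],
    ![false, false, true, true, false, false, true, true],
    ![false, false, false, true, true, true, true, false]],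
  ![![false, true, true, false, false, true, true, false],
    ![false, false, false, false, true, true, true, true],
    ![false, false, true, true, true, true, false, false]],
  ![![false, true, true, false, false, false, true, true],
    ![false, false, false, false, true, true, true, true],
    ![false, false, true, true, true, false, false, true]],
  ![![false, true, true, true, true, false, false, false],
    ![false, false, false, true, true, true, true, false],
    ![false, false, true, true, false, false, true, true]],
  ![![false, false, true, true, true, false, false, true],
    ![false, true, true, false, false, false, true, true],
    ![false, false, false, false, true, true, true, true]],
  ![![false, false, true, true, true, true, false, false],
    ![false, true, true, false, false, true, true, false],
    ![false, false, false, false, true, true, true, true]],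
  ![![false, false, true, true, false, false, true, true],
    ![false, true, true, true, true, false, false, false],
    ![false, false, false, true, true, true, true, false]],
  ![![false, false, false, true, true, true, true, false],
    ![false, true, true, true, true, false, false, false],
    ![false, false, true, true, false, false, true, true]],
  ![![false, false, false, false, true, true, true, true],
    ![false, true, true, false, false, true, true, false],
    ![false, false, true, true, true, true, false, false]],
  ![![false, false, false, false, true, true, true, true],
    ![false, true, true, false, false, false, true, true],
    ![false, false, true, true, true, false, false, true]],
  ![![false, false, true, true, false, false, true, true],
    ![false, false, false, true, true, true, true, false],
    ![false, true, true, true, true, false, false, false]],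
  ![![false, false, true, true, true, false, false, true],
    ![false, false, false, false, true, true, true, true],
    ![false, true, true, false, false, false, true, true]],
  ![![false, false, true, true, true, true, false, false],
    ![false, false, false, false, true, true, true, true],
    ![false, true, true, false, false, true, true, false]],
  ![![false, false, false, true, true, true, true, false],
    ![false, false, true, true, false, false, true, true],
    ![false, true, true, true, true, false, false, false]],
  ![![false, false, false, false, true, true, true, true],
    ![false, false, true, true, true, false, false, true],
    ![false, true, true, false, false, false, true, true]],
  ![![false, false, false, false, true, true, true, true],
    ![false, false, true, true, true, true, false, false],
    ![false, true, true, false, false, true, true, false]]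
]

def S0 : Finset (Fin 3 → Fin 8 → Bool) := S0list.toFinset

theorem cols_succ (c : Fin 3 → Bool) (t : Fin 7 → Fin 3) (j : ℕ) (h : j < 7) (i : Fin 3) :
    cols c t (j+1) i = xor (decide (t ⟨j, h⟩ = i)) (cols c t j i) := by
  simp [cols, dif_pos h]

/-- Adjacent transitions are distinct when the columns are injective. -/
theorem R_of_Q (t : Fin 7 → Fin 3) (hQ : Q t) : R t := by
  intro j hEq
  have hv : j.val + 2 < 8 := by omega
  have hcol : ∀ i, cols (fun _ => false) t (j.val + 2) i = cols (fun _ => false) t j.val i := by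
    intro i
    have h1 : j.val < 7 := by omega
    have h2 : j.val + 1 < 7 := by omega
    have e1 : t j.castSucc = t ⟨j.val, h1⟩ := rfl
    have e2 : t j.succ = t ⟨j.val + 1, h2⟩ := rfl
    rw [show j.val + 2 = (j.val + 1) + 1 from rfl, cols_succ _ _ _ h2, cols_succ _ _ _ h1,
      ← e1, ← e2, ← hEq, ← Bool.xor_assoc, Bool.xor_self, Bool.false_xor]
  have : (⟨j.val + 2, hv⟩ : Fin 8) = ⟨j.val, by omega⟩ := by
    apply hQ
    funext i
    exact hcol i
  simp [Fin.ext_iff] at this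

set_option maxRecDepth 10000 in
set_option maxHeartbeats 4000000 in
theorem mem_T18 : ∀ a b c d e f h : Fin 3,
    R ![a,b,c,d,e,f,h] → Q ![a,b,c,d,e,f,h] → ![a,b,c,d,e,f,h] ∈ T18 := by decide

set_option maxRecDepth 10000 in
theorem g_mem_S0 : ∀ t ∈ T18, g (fun _ => false) t ∈ S0list := by
  intro t ht
  fin_cases ht <;> decide

set_option maxRecDepth 10000 in
set_option maxHeartbeats 1000000 in
theorem S0_prop : ∀ A ∈ S0list, IsGrayCode3 A ∧ ∀ i, A i 0 = false := by
  intro A hA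
  fin_cases hA <;> decide

/-- Reconstruction: every Gray code starting at the zero column is generated by a
transition sequence. -/
theorem exists_t (A : Fin 3 → Fin 8 → Bool) (hG : IsGrayCode3 A)
    (h0 : ∀ i, A i 0 = false) : ∃ t : Fin 7 → Fin 3, g (fun _ => false) t = A := by
  choose tf htf using fun j => Finset.card_eq_one.mp (hG.2 j)
  refine ⟨tf, ?_⟩
  have key : ∀ (j : Fin 7) (i : Fin 3), (A i j.castSucc ≠ A i j.succ) ↔ i = tf j := by
    intro j i
    constructor
    · intro h
      have : i ∈ Finset.univ.filter fun i : Fin 3 => A i j.castSucc ≠ A i j.succ := by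
        simp [h]
      rw [htf j] at this
      simpa using this
    · intro h
      have : i ∈ ({tf j} : Finset (Fin 3)) := by simp [h]
      rw [← htf j] at this
      simpa using this
  have main : ∀ n (h : n < 8) (i : Fin 3), A i ⟨n, h⟩ = cols (fun _ => false) tf n i := by
    intro n
    induction n with
    | zero =>
      intro h i
      have : (⟨0, h⟩ : Fin 8) = 0 := rfl
      rw [this, h0 i]; rfl
    | succ n ih =>
      intro h i
      have hn7 : n < 7 := by omega
      have hn8 : n < 8 := by omega
      rw [cols_succ _ _ _ hn7, ← ih hn8 i]
      set j : Fin 7 := ⟨n, hn7⟩ with hj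
      have hcs : j.castSucc = (⟨n, hn8⟩ : Fin 8) := rfl
      have hsc : j.succ = (⟨n + 1, h⟩ : Fin 8) := rfl
      by_cases hi : tf j = i
      · have hne : A i j.castSucc ≠ A i j.succ := (key j i).mpr hi.symm
        rw [hcs, hsc] at hne
        have hd : decide (tf j = i) = true := by simp [hi]
        rw [hd]
        cases hA : A i ⟨n, hn8⟩ <;> cases hA' : A i ⟨n+1, h⟩ <;> simp_all
      · have heq : A i j.castSucc = A i j.succ := by
          by_contra hne
          exact hi ((key j i).mp hne).symm
        rw [hcs, hsc] at heq
        have hd : decide (tf j = i) = false := by simp [hi]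
        rw [hd, heq.symm]
        simp
  funext i j
  show cols (fun _ => false) tf j.val i = A i j
  rw [main j.val j.isLt i]

/-- The key set identity for the base column. -/
theorem filter_eq_S0 :
    (Finset.univ.filter fun A : Fin 3 → Fin 8 → Bool =>
        IsGrayCode3 A ∧ ∀ i, A i 0 = false) = S0 := by
  ext A
  simp only [Finset.mem_filter, Finset.mem_univ, true_and, S0, List.mem_toFinset]
  constructor
  · rintro ⟨hG, h0⟩
    obtain ⟨t, ht⟩ := exists_t A hG h0
    have hQ : Q t := by
      unfold Q
      rw [show (fun j : Fin 8 => fun i : Fin 3 => g (fun _ => false) t i j)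
          = (fun j : Fin 8 => fun i : Fin 3 => A i j) from by rw [ht]]
      exact hG.1.1
    have hR : R t := R_of_Q t hQ
    have hteq : t = ![t 0, t 1, t 2, t 3, t 4, t 5, t 6] := by
      funext k; fin_cases k <;> rfl
    have hmem : t ∈ T18 := by
      rw [hteq]; exact mem_T18 _ _ _ _ _ _ _ (hteq ▸ hR) (hteq ▸ hQ)
    rw [← ht]
    exact g_mem_S0 t hmem
  · intro h
    exact S0_prop A h

set_option maxRecDepth 10000 in
theorem B1 : S0.card = 18 := by decide

set_option maxRecDepth 10000 in
set_option maxHeartbeats 1000000 in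
theorem B2 : ∀ A ∈ S0list, ∀ B ∈ S0list,
    (MatEquiv3 A B ↔ transCounts3 A = transCounts3 B) := by
  intro A hA
  fin_cases hA <;> · intro B hB; fin_cases hB <;> decide

set_option maxRecDepth 10000 in
set_option maxHeartbeats 1000000 in
theorem B3 : ∀ A ∈ S0list, (S0.filter fun B => MatEquiv3 A B).card = 6 := by
  intro A hA
  fin_cases hA <;> decide

set_option maxRecDepth 10000 in
set_option maxHeartbeats 1000000 in
theorem B4 : (S0.image transCounts3).card = 3 := by decide

/-! ### Transport from the zero column to a general first column -/

def X (c : Fin 3 → Bool) (A : Fin 3 → Fin 8 → Bool) : Fin 3 → Fin 8 → Bool :=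
  fun i j => xor (c i) (A i j)

theorem X_X (c : Fin 3 → Bool) (A : Fin 3 → Fin 8 → Bool) : X c (X c A) = A := by
  funext i j
  simp only [X]
  cases c i <;> simp

theorem X_inj (c : Fin 3 → Bool) : Function.Injective (X c) :=
  Function.Involutive.injective (X_X c)

theorem isGray_X_of (c : Fin 3 → Bool) (A : Fin 3 → Fin 8 → Bool) (hG : IsGrayCode3 A) :
    IsGrayCode3 (X c A) := by
  constructor
  · have : (fun j : Fin 8 => fun i : Fin 3 => X c A i j)
        = (fun v : Fin 3 → Bool => fun i => xor (c i) (v i)) ∘ (fun j i => A i j) := rfl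
    rw [this]
    apply Function.Bijective.comp _ hG.1
    apply Function.Involutive.bijective
    intro v
    funext i
    cases c i <;> simp
  · intro j
    have : (Finset.univ.filter fun i : Fin 3 => X c A i j.castSucc ≠ X c A i j.succ)
        = Finset.univ.filter fun i : Fin 3 => A i j.castSucc ≠ A i j.succ := by
      apply Finset.filter_congr
      intro i _
      simp only [X]
      cases c i <;> simp
    rw [this]
    exact hG.2 j

theorem isGray_X (c : Fin 3 → Bool) (A : Fin 3 → Fin 8 → Bool) :
    IsGrayCode3 (X c A) ↔ IsGrayCode3 A := by
  constructor
  · intro h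
    have := isGray_X_of c _ h
    rwa [X_X] at this
  · exact isGray_X_of c A

theorem transCount_X (c : Fin 3 → Bool) (A : Fin 3 → Fin 8 → Bool) (i : Fin 3) :
    transCount3 (X c A) i = transCount3 A i := by
  unfold transCount3
  congr 1
  apply Finset.filter_congr
  intro j _
  simp only [X]
  cases c i <;> simp

theorem transCounts_X (c : Fin 3 → Bool) (A : Fin 3 → Fin 8 → Bool) :
    transCounts3 (X c A) = transCounts3 A := by
  unfold transCounts3
  apply Multiset.map_congr rfl
  intro i _
  exact transCount_X c A i

theorem matEquiv_refl (A : Fin 3 → Fin 8 → Bool) : MatEquiv3 A A :=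
  ⟨1, fun _ => false, fun i j => by simp⟩

theorem matEquiv_symm {A B : Fin 3 → Fin 8 → Bool} (h : MatEquiv3 A B) : MatEquiv3 B A := by
  obtain ⟨π, ε, h⟩ := h
  refine ⟨π⁻¹, fun i => ε (π⁻¹ i), fun i j => ?_⟩
  rw [h (π⁻¹ i) j]
  simp only [Equiv.Perm.inv_def, Equiv.apply_symm_apply]
  cases ε (π⁻¹ i) <;> simp

theorem matEquiv_trans {A B C : Fin 3 → Fin 8 → Bool}
    (h1 : MatEquiv3 A B) (h2 : MatEquiv3 B C) : MatEquiv3 A C := by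
  obtain ⟨π1, ε1, h1⟩ := h1
  obtain ⟨π2, ε2, h2⟩ := h2
  refine ⟨π2.trans π1, fun i => xor (ε2 i) (ε1 (π2 i)), fun i j => ?_⟩
  rw [h2 i j, h1 (π2 i) j]
  simp only [Equiv.trans_apply]
  cases ε2 i <;> cases ε1 (π2 i) <;> simp

theorem matEquiv_X (c : Fin 3 → Bool) (A : Fin 3 → Fin 8 → Bool) : MatEquiv3 A (X c A) :=
  ⟨1, c, fun i j => by simp [X]⟩

theorem matEquiv_X_iff (c : Fin 3 → Bool) (A B : Fin 3 → Fin 8 → Bool) :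
    MatEquiv3 (X c A) (X c B) ↔ MatEquiv3 A B := by
  constructor
  · intro h
    exact matEquiv_trans (matEquiv_trans (matEquiv_X c A) h) (matEquiv_symm (matEquiv_X c B))
  · intro h
    exact matEquiv_trans (matEquiv_trans (matEquiv_symm (matEquiv_X c A)) h) (matEquiv_X c B)

theorem X_mem_S0 (c : Fin 3 → Bool) (A : Fin 3 → Fin 8 → Bool)
    (hG : IsGrayCode3 A) (h0 : ∀ i, A i 0 = c i) : X c A ∈ S0 := by
  rw [← filter_eq_S0]
  simp only [Finset.mem_filter, Finset.mem_univ, true_and]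
  refine ⟨isGray_X_of c A hG, fun i => ?_⟩
  simp [X, h0 i]

theorem filter_c (c : Fin 3 → Bool) :
    (Finset.univ.filter fun A : Fin 3 → Fin 8 → Bool =>
        IsGrayCode3 A ∧ ∀ i, A i 0 = c i) = S0.image (X c) := by
  ext A
  simp only [Finset.mem_filter, Finset.mem_univ, true_and, Finset.mem_image]
  constructor
  · rintro ⟨hG, h0⟩
    exact ⟨X c A, X_mem_S0 c A hG h0, X_X c A⟩
  · rintro ⟨A0, hA0, rfl⟩
    rw [← filter_eq_S0] at hA0
    simp only [Finset.mem_filter, Finset.mem_univ, true_and] at hA0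
    refine ⟨isGray_X_of c A0 hA0.1, fun i => ?_⟩
    simp [X, hA0.2 i]

theorem grayCode3_classes (c : Fin 3 → Bool) :
    (Finset.univ.filter fun A : Fin 3 → Fin 8 → Bool =>
        IsGrayCode3 A ∧ ∀ i, A i 0 = c i).card = 18 ∧
    (∀ A B : Fin 3 → Fin 8 → Bool,
        IsGrayCode3 A → (∀ i, A i 0 = c i) → IsGrayCode3 B → (∀ i, B i 0 = c i) →
        (MatEquiv3 A B ↔ transCounts3 A = transCounts3 B)) ∧
    (∀ A : Fin 3 → Fin 8 → Bool, IsGrayCode3 A → (∀ i, A i 0 = c i) →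
        (Finset.univ.filter fun B : Fin 3 → Fin 8 → Bool =>
          (IsGrayCode3 B ∧ ∀ i, B i 0 = c i) ∧ MatEquiv3 A B).card = 6) ∧
    (Finset.image transCounts3
        (Finset.univ.filter fun A : Fin 3 → Fin 8 → Bool =>
          IsGrayCode3 A ∧ ∀ i, A i 0 = c i)).card = 3 := by
  have hS := filter_c c
  refine ⟨?_, ?_, ?_, ?_⟩
  · rw [hS, Finset.card_image_of_injective _ (X_inj c), B1]
  · intro A B hGA h0A hGB h0B
    have hA : X c A ∈ S0list := by
      have := X_mem_S0 c A hGA h0A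
      simpa [S0, List.mem_toFinset] using this
    have hB : X c B ∈ S0list := by
      have := X_mem_S0 c B hGB h0B
      simpa [S0, List.mem_toFinset] using this
    rw [← matEquiv_X_iff c A B, B2 _ hA _ hB, transCounts_X, transCounts_X]
  · intro A hGA h0A
    have key : (Finset.univ.filter fun B : Fin 3 → Fin 8 → Bool =>
          (IsGrayCode3 B ∧ ∀ i, B i 0 = c i) ∧ MatEquiv3 A B)
        = ((Finset.univ.filter fun B : Fin 3 → Fin 8 → Bool =>
            IsGrayCode3 B ∧ ∀ i, B i 0 = c i).filter fun B => MatEquiv3 A B) := by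
      rw [Finset.filter_filter]
    rw [key, hS, Finset.filter_image,
      Finset.card_image_of_injective _ (X_inj c)]
    have hpred : (S0.filter fun B0 => MatEquiv3 A (X c B0))
        = (S0.filter fun B0 => MatEquiv3 (X c A) B0) := by
      apply Finset.filter_congr
      intro B0 _
      rw [← matEquiv_X_iff c A (X c B0), X_X]
    rw [hpred]
    apply B3
    have := X_mem_S0 c A hGA h0A
    simpa [S0, List.mem_toFinset] using this
  · rw [hS, Finset.image_image]
    have himg : S0.image (transCounts3 ∘ X c) = S0.image transCounts3 :=
      Finset.image_congr fun A _ => transCounts_X c A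
    rw [himg, B4]
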